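/- Let G be a finite group and H a finite solvable group. If G has no normal subgroup of index p for any prime p dividing gcd(|G|,|H|), then the only group homomorphism from G to H is the trivial homomorphism, i.e., |Hom(G,H)| = 1. -/

import Mathlib

lemma aux_commutator_ne_top (S : Type*) [Group S] [Nontrivial S] [Group.IsSolvable S] :
    commutator S ≠ ⊤ := by
  intro hc
  obtain ⟨n, hn⟩ := Group.IsSolvable.solvable (G := S)
  have key : ∀ m : ℕ, derivedSeries S (m + 1) = ⊤ := by
    intro m
    induction m with
    | zero => rw [derivedSeries_one]; exact hc
    | succ m ih =>
      rw [derivedSeries_succ, ih, ← commutator_def, hc]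
  obtain ⟨x, hx⟩ := exists_ne (1 : S)
  cases n with
  | zero =>
    simp only [derivedSeries_zero] at hn
    exact hx (Subgroup.mem_bot.mp (hn ▸ Subgroup.mem_top x))
  | succ n =>
    rw [key n] at hn
    exact hx (Subgroup.mem_bot.mp (hn ▸ Subgroup.mem_top x))

lemma aux_simple_quotient {A : Type*} [CommGroup A] {M : Subgroup A}
    (hM : IsCoatom M) : IsSimpleGroup (A ⧸ M) := by
  have hnt : Nontrivial (A ⧸ M) := by
    obtain ⟨a, ha⟩ : ∃ a, a ∉ M := by
      by_contra hcon
      push_neg at hcon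
      exact hM.1 ((Subgroup.eq_top_iff' M).mpr hcon)
    exact ⟨⟨(a : A ⧸ M), 1, fun hh => ha ((QuotientGroup.eq_one_iff a).mp hh)⟩⟩
  refine ⟨fun K _ => ?_⟩
  have hsurj : Function.Surjective (QuotientGroup.mk' M) := QuotientGroup.mk'_surjective M
  have hle : M ≤ Subgroup.comap (QuotientGroup.mk' M) K := by
    intro x hx
    simp only [Subgroup.mem_comap, QuotientGroup.mk'_apply]
    have : ((x : A ⧸ M)) = 1 := (QuotientGroup.eq_one_iff x).mpr hx
    rw [this]; exact K.one_mem
  by_cases heq : Subgroup.comap (QuotientGroup.mk' M) K = M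
  · left
    have := Subgroup.map_comap_eq_self_of_surjective hsurj K
    rw [← this, heq]
    ext y
    simp only [Subgroup.mem_map, Subgroup.mem_bot]
    constructor
    · rintro ⟨x, hx, rfl⟩
      exact (QuotientGroup.eq_one_iff x).mpr hx
    · rintro rfl
      exact ⟨1, M.one_mem, rfl⟩
  · right
    have heqt : Subgroup.comap (QuotientGroup.mk' M) K = ⊤ :=
      hM.2 _ (lt_of_le_of_ne hle (Ne.symm heq))
    have := Subgroup.map_comap_eq_self_of_surjective hsurj K
    rw [← this, heqt]
    simpa using Subgroup.map_top_of_surjective _ hsurj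

theorem solvable_codomain_no_normal_subgroup_trivial_hom
    (G H : Type*) [Group G] [Group H] [Finite G] [Finite H] [Group.IsSolvable H]
    (h : ∀ p : ℕ, p.Prime → p ∣ Nat.gcd (Nat.card G) (Nat.card H) →
      ¬ ∃ K : Subgroup G, K.Normal ∧ K.index = p) :
    ∀ φ : G →* H, φ = 1 := by
  intro φ
  by_contra hφ
  -- S = range of φ, a nontrivial solvable finite group
  set S := φ.range with hS
  have hSnt : Nontrivial S := by
    obtain ⟨g, hg⟩ : ∃ g : G, φ g ≠ 1 := by
      by_contra hcon
      push_neg at hcon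
      exact hφ (MonoidHom.ext fun g => hcon g)
    exact ⟨⟨⟨φ g, g, rfl⟩, 1, fun hh => hg (by simpa using congrArg Subtype.val hh)⟩⟩
  have hSsolv : Group.IsSolvable S := inferInstance
  -- Abelianization of S is nontrivial
  have hcomm : commutator S ≠ ⊤ := aux_commutator_ne_top S
  let A := Abelianization S
  have hAnt : Nontrivial A := by
    obtain ⟨a, ha⟩ : ∃ a : S, a ∉ commutator S := by
      by_contra hcon
      push_neg at hcon
      exact hcomm ((Subgroup.eq_top_iff' _).mpr hcon)
    refine ⟨⟨Abelianization.of a, 1, fun hh => ha ?_⟩⟩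
    exact (QuotientGroup.eq_one_iff a).mp hh
  have hAfin : Finite A := Quotient.finite _
  -- find a coatom M of subgroups of A
  obtain ⟨M, hM⟩ : ∃ M : Subgroup A, IsCoatom M := by
    rcases IsCoatomic.eq_top_or_exists_le_coatom (⊥ : Subgroup A) with hb | ⟨M, hM, _⟩
    · exact absurd hb bot_ne_top
    · exact ⟨M, hM⟩
  have hsimple : IsSimpleGroup (A ⧸ M) := aux_simple_quotient hM
  have hQnt : Nontrivial (A ⧸ M) := hsimple.toNontrivial
  -- the quotient has prime order p
  have hp : (Nat.card (A ⧸ M)).Prime := IsSimpleGroup.prime_card (α := A ⧸ M)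
  set p := Nat.card (A ⧸ M) with hpdef
  -- the composite surjection G → A ⧸ M
  let ψ : G →* A ⧸ M :=
    (QuotientGroup.mk' M).comp ((Abelianization.of (G := S)).comp φ.rangeRestrict)
  have hψsurj : Function.Surjective ψ := by
    apply Function.Surjective.comp (QuotientGroup.mk'_surjective M)
    apply Function.Surjective.comp (g := ⇑(Abelianization.of (G := S)))
    · exact fun x => Quotient.inductionOn x (fun a => ⟨a, rfl⟩)
    · exact φ.rangeRestrict_surjective
  -- kernel of ψ is a normal subgroup of index p
  have hker : ψ.ker.index = p := by
    rw [Subgroup.index_ker, MonoidHom.range_eq_top_of_surjective ψ hψsurj]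
    exact Nat.card_congr Subgroup.topEquiv.toEquiv
  -- p divides card G and card H
  have hdvdG : p ∣ Nat.card G := hker ▸ Subgroup.index_dvd_card ψ.ker
  have hdvdH : p ∣ Nat.card H := by
    have h1 : p ∣ Nat.card A := by
      have : Nat.card (A ⧸ M) = M.index := rfl
      rw [hpdef, this]
      exact Subgroup.index_dvd_card M
    have h2 : Nat.card A ∣ Nat.card S := by
      have : Nat.card (S ⧸ commutator S) = (commutator S).index := rfl
      have hA : Nat.card A = (commutator S).index := this
      rw [hA]
      exact Subgroup.index_dvd_card (commutator S)
    have h3 : Nat.card S ∣ Nat.card H := Subgroup.card_subgroup_dvd_card S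
    exact h1.trans (h2.trans h3)
  exact h p hp (Nat.dvd_gcd hdvdG hdvdH) ⟨ψ.ker, inferInstance, hker⟩
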